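/- arXiv:0902.2484 — 2 statements merged into one kernel-verified Lean document; each statement's English description precedes it below -/
import Mathlib

section
/- Let (λ_n)_{n∈ℕ} be a nondecreasing sequence of real numbers tending to +∞, and suppose there exists β₀ > 0 such that Σ_n e^{−β₀·λ_n} converges. Let μ be a real number with μ ≠ λ_n for every n, and let N(μ) = #{n : λ_n < μ} (a finite number since λ_n → ∞). Then the sums Σ_n 1/(e^{β(λ_n−μ)} + 1) converge for all sufficiently large β > 0, and lim_{β→∞} Σ_n 1/(e^{β(λ_n−μ)} + 1) = N(μ). -/
open Real Filter

set_option maxHeartbeats 1000000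

lemma aux_le (x : ℝ) : 1 / (Real.exp x + 1) ≤ Real.exp (-x) := by
  rw [Real.exp_neg, ← one_div]
  exact one_div_le_one_div_of_le (Real.exp_pos x) (by linarith)

/-- For a nondecreasing real sequence `lam` tending to `+∞` with
`∑ n, exp (-β₀ * lam n)` summable for some `β₀ > 0`, and `μ` avoiding all `lam n`,
the sums `∑ n, 1 / (exp (β * (lam n - μ)) + 1)` are summable for all sufficiently
large `β` and tend, as `β → ∞`, to the counting function `N(μ) = #{n | lam n < μ}`. -/
theorem counting_function_as_limit
    (lam : ℕ → ℝ) (hmono : Monotone lam)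
    (htend : Filter.Tendsto lam Filter.atTop Filter.atTop)
    (β₀ : ℝ) (hβ₀ : 0 < β₀)
    (hsum : Summable fun n => Real.exp (-β₀ * lam n))
    (μ : ℝ) (hμ : ∀ n, μ ≠ lam n) :
    (∀ᶠ β in Filter.atTop, Summable fun n => 1 / (Real.exp (β * (lam n - μ)) + 1)) ∧
    Filter.Tendsto
      (fun β : ℝ => ∑' n, 1 / (Real.exp (β * (lam n - μ)) + 1))
      Filter.atTop
      (nhds ((Nat.card {n : ℕ | lam n < μ} : ℝ))) := by
  have hex : ∃ n, μ ≤ lam n := (htend.eventually_ge_atTop μ).exists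
  set N := Nat.find hex with hNdef
  have hNlt : μ < lam N := lt_of_le_of_ne (Nat.find_spec hex) (hμ N)
  have hlt : ∀ n < N, lam n < μ := fun n hn => lt_of_not_ge (Nat.find_min hex hn)
  clear_value N
  have hge : ∀ n, N ≤ n → μ < lam n := fun n hn => lt_of_lt_of_le hNlt (hmono hn)
  have hset : {n : ℕ | lam n < μ} = Set.Iio N := by
    ext n
    simp only [Set.mem_setOf_eq, Set.mem_Iio]
    constructor
    · intro h
      by_contra hc
      exact absurd h (not_lt.2 (hge n (not_lt.1 hc)).le)
    · exact hlt n
  have hcard : (Nat.card {n : ℕ | lam n < μ} : ℝ) = (N : ℝ) := by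
    rw [hset]
    norm_cast
    simp [Nat.card_eq_card_toFinset]
  have key : ∀ β ≥ β₀, Summable fun n => 1 / (Real.exp (β * (lam n - μ)) + 1) := by
    intro β hβ
    apply Summable.of_nonneg_of_le (fun n => by positivity)
      (f := fun n => Real.exp (β * μ + (β₀ - β) * lam 0) * Real.exp (-β₀ * lam n))
    · intro n
      calc 1 / (Real.exp (β * (lam n - μ)) + 1)
          ≤ Real.exp (-(β * (lam n - μ))) := aux_le _
        _ ≤ Real.exp (β * μ + (β₀ - β) * lam 0) * Real.exp (-β₀ * lam n) := by
            rw [← Real.exp_add]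
            apply Real.exp_le_exp.2
            have h0 : lam 0 ≤ lam n := hmono (Nat.zero_le n)
            nlinarith [mul_nonneg (sub_nonneg.2 hβ) (sub_nonneg.2 h0)]
    · exact hsum.mul_left _
  refine ⟨eventually_atTop.2 ⟨β₀, key⟩, ?_⟩
  rw [hcard]
  set δ := lam N - μ with hδdef
  have hδ : 0 < δ := sub_pos.2 hNlt
  have hsumN : Summable fun n => Real.exp (-β₀ * (lam (n + N) - μ)) := by
    have h1 : Summable fun n => Real.exp (-β₀ * lam (n + N)) :=
      (summable_nat_add_iff N).mpr hsum
    have := h1.mul_left (Real.exp (β₀ * μ))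
    apply this.congr
    intro n
    rw [← Real.exp_add]
    congr 1
    ring
  set C := ∑' n, Real.exp (-β₀ * (lam (n + N) - μ)) with hC
  have h1 : Tendsto (fun β : ℝ => ∑ i ∈ Finset.range N, 1 / (Real.exp (β * (lam i - μ)) + 1))
      atTop (nhds (N : ℝ)) := by
    have hN : (N : ℝ) = ∑ _i ∈ Finset.range N, (1 : ℝ) := by simp
    rw [hN]
    apply tendsto_finset_sum
    intro i hi
    have hi' : lam i - μ < 0 := sub_neg.2 (hlt i (Finset.mem_range.1 hi))
    have hexp : Tendsto (fun β : ℝ => Real.exp (β * (lam i - μ))) atTop (nhds 0) := by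
      apply Real.tendsto_exp_atBot.comp
      exact Tendsto.atTop_mul_const_of_neg hi' tendsto_id
    have hdiv : Tendsto (fun β : ℝ => 1 / (Real.exp (β * (lam i - μ)) + 1)) atTop
        (nhds (1 / (0 + 1))) :=
      tendsto_const_nhds.div (hexp.add_const 1) (by norm_num)
    norm_num at hdiv
    simpa [one_div] using hdiv
  have h2 : Tendsto (fun β : ℝ => ∑' n, 1 / (Real.exp (β * (lam (n + N) - μ)) + 1))
      atTop (nhds 0) := by
    have hub : ∀ β ≥ β₀, (∑' n, 1 / (Real.exp (β * (lam (n + N) - μ)) + 1)) ≤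
        Real.exp (-(β - β₀) * δ) * C := by
      intro β hβ
      have hbound : ∀ n, 1 / (Real.exp (β * (lam (n + N) - μ)) + 1) ≤
          Real.exp (-(β - β₀) * δ) * Real.exp (-β₀ * (lam (n + N) - μ)) := by
        intro n
        have hd : δ ≤ lam (n + N) - μ := by
          have : lam N ≤ lam (n + N) := hmono (Nat.le_add_left N n)
          simp [hδdef]; linarith
        calc 1 / (Real.exp (β * (lam (n + N) - μ)) + 1)
            ≤ Real.exp (-(β * (lam (n + N) - μ))) := aux_le _
          _ = Real.exp (-(β - β₀) * (lam (n + N) - μ)) *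
              Real.exp (-β₀ * (lam (n + N) - μ)) := by
              rw [← Real.exp_add]; congr 1; ring
          _ ≤ Real.exp (-(β - β₀) * δ) * Real.exp (-β₀ * (lam (n + N) - μ)) := by
              apply mul_le_mul_of_nonneg_right _ (Real.exp_pos _).le
              apply Real.exp_le_exp.2
              nlinarith [mul_nonneg (sub_nonneg.2 hβ) (sub_nonneg.2 hd)]
      calc (∑' n, 1 / (Real.exp (β * (lam (n + N) - μ)) + 1))
          ≤ ∑' n, Real.exp (-(β - β₀) * δ) * Real.exp (-β₀ * (lam (n + N) - μ)) :=
            Summable.tsum_le_tsum hbound ((summable_nat_add_iff N).mpr (key β hβ))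
              (hsumN.mul_left _)
        _ = Real.exp (-(β - β₀) * δ) * C := tsum_mul_left
    have hupper : Tendsto (fun β : ℝ => Real.exp (-(β - β₀) * δ) * C) atTop (nhds 0) := by
      rw [show (0:ℝ) = 0 * C by ring]
      apply Tendsto.mul_const
      apply Real.tendsto_exp_atBot.comp
      have hTop : Tendsto (fun β : ℝ => β - β₀) atTop atTop :=
        tendsto_atTop_add_const_right atTop (-β₀) tendsto_id
      have := Tendsto.atTop_mul_const_of_neg (neg_lt_zero.2 hδ) hTop
      apply this.congr
      intro β
      ring
    apply tendsto_of_tendsto_of_tendsto_of_le_of_le' tendsto_const_nhds hupper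
    · exact Eventually.of_forall fun β => tsum_nonneg fun n => by positivity
    · filter_upwards [eventually_ge_atTop β₀] with β hβ using hub β hβ
  have hadd := h1.add h2
  rw [add_zero] at hadd
  apply hadd.congr'
  filter_upwards [eventually_ge_atTop β₀] with β hβ
  exact (Summable.sum_add_tsum_nat_add N (key β hβ))
end

section
/- (Generalized Abel partial summation.) Let (λ_n)_{n≥1} be a nondecreasing sequence of real numbers tending to +∞, let b : ℕ → ℂ be arbitrary complex numbers, and define B(u) = Σ_{n : λ_n ≤ u} b(n) (a finite sum for each real u). Let 0 ≤ u₁ < u₂ be reals with λ_1 ≤ u₂, and let f be a continuously differentiable complex-valued function on [u₁, u₂]. Then Σ_{n : u₁ < λ_n ≤ u₂} b(n) f(λ_n) = B(u₂) f(u₂) − B(u₁) f(u₁) − ∫_{u₁}^{u₂} B(u) f′(u) du. -/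
open MeasureTheory


/-- Generalized Abel partial summation: for a nondecreasing real
sequence `(lam n)_{n ≥ 1}` tending to `+∞`, arbitrary complex `b n`, partial sums
`B(u) = ∑_{n ≥ 1, lam n ≤ u} b n`, reals `0 ≤ u₁ < u₂` with `lam 1 ≤ u₂`, and a
continuously differentiable `f` on `[u₁, u₂]`:
`∑_{u₁ < lam n ≤ u₂} b n * f (lam n)
  = B(u₂) f(u₂) − B(u₁) f(u₁) − ∫_{u₁}^{u₂} B(u) f'(u) du`. -/
theorem generalized_abel_summation
    (lam : ℕ → ℝ) (hmono : Monotone lam)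
    (htend : Filter.Tendsto lam Filter.atTop Filter.atTop)
    (b : ℕ → ℂ)
    (B : ℝ → ℂ)
    (hB : ∀ u : ℝ, B u = ∑ᶠ n ∈ {n : ℕ | 1 ≤ n ∧ lam n ≤ u}, b n)
    (u₁ u₂ : ℝ) (hu₁ : 0 ≤ u₁) (hu₁₂ : u₁ < u₂) (hlam : lam 1 ≤ u₂)
    (f f' : ℝ → ℂ)
    (hf : ∀ u ∈ Set.Icc u₁ u₂, HasDerivWithinAt f (f' u) (Set.Icc u₁ u₂) u)
    (hf' : ContinuousOn f' (Set.Icc u₁ u₂)) :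
    ∑ᶠ n ∈ {n : ℕ | 1 ≤ n ∧ u₁ < lam n ∧ lam n ≤ u₂}, b n * f (lam n) =
      B u₂ * f u₂ - B u₁ * f u₁ - ∫ u in u₁..u₂, B u * f' u := by
  have hle : u₁ ≤ u₂ := hu₁₂.le
  obtain ⟨N, hN⟩ := Filter.eventually_atTop.1 (htend.eventually_gt_atTop u₂)
  -- set descriptions
  have hset : ∀ u ≤ u₂, {n : ℕ | 1 ≤ n ∧ lam n ≤ u}
      = ↑((Finset.Ico 1 N).filter (fun n => lam n ≤ u)) := by
    intro u hu
    ext n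
    simp only [Set.mem_setOf_eq, Finset.coe_filter, Finset.mem_Ico]
    constructor
    · rintro ⟨h1, h2⟩
      refine ⟨⟨h1, ?_⟩, h2⟩
      by_contra h
      push_neg at h
      exact absurd (h2.trans hu) (not_le.2 (hN n h))
    · rintro ⟨⟨h1, _⟩, h2⟩; exact ⟨h1, h2⟩
  have hBu : ∀ u ≤ u₂, B u = ∑ n ∈ Finset.Ico 1 N, if lam n ≤ u then b n else 0 := by
    intro u hu
    rw [hB u, hset u hu, finsum_mem_coe_finset, Finset.sum_filter]
  have hLHS : ∑ᶠ n ∈ {n : ℕ | 1 ≤ n ∧ u₁ < lam n ∧ lam n ≤ u₂}, b n * f (lam n)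
      = ∑ n ∈ Finset.Ico 1 N, if u₁ < lam n ∧ lam n ≤ u₂ then b n * f (lam n) else 0 := by
    have : {n : ℕ | 1 ≤ n ∧ u₁ < lam n ∧ lam n ≤ u₂}
        = ↑((Finset.Ico 1 N).filter (fun n => u₁ < lam n ∧ lam n ≤ u₂)) := by
      ext n
      simp only [Set.mem_setOf_eq, Finset.coe_filter, Finset.mem_Ico]
      constructor
      · rintro ⟨h1, h2, h3⟩
        refine ⟨⟨h1, ?_⟩, h2, h3⟩
        by_contra h
        push_neg at h
        exact absurd h3 (not_le.2 (hN n h))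
      · rintro ⟨⟨h1, _⟩, h2⟩; exact ⟨h1, h2⟩
    rw [this, finsum_mem_coe_finset, Finset.sum_filter]
  -- continuity and FTC
  have fcont : ContinuousOn f (Set.Icc u₁ u₂) := fun x hx => (hf x hx).continuousWithinAt
  have ftc : ∀ a ∈ Set.Icc u₁ u₂, ∫ u in a..u₂, f' u = f u₂ - f a := by
    intro a ha
    apply intervalIntegral.integral_eq_sub_of_hasDeriv_right_of_le ha.2
    · exact fcont.mono (Set.Icc_subset_Icc ha.1 le_rfl)
    · intro x hx
      have hx' : x ∈ Set.Ioo u₁ u₂ := ⟨lt_of_le_of_lt ha.1 hx.1, hx.2⟩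
      exact ((hf x (Set.Ioo_subset_Icc_self hx')).hasDerivAt
        (Icc_mem_nhds hx'.1 hx'.2)).hasDerivWithinAt
    · refine (hf'.mono (Set.Icc_subset_Icc ha.1 le_rfl)).intervalIntegrable_of_Icc ha.2
  -- the summand functions
  set g : ℕ → ℝ → ℂ := fun n u => (if lam n ≤ u then b n else 0) * f' u with hg
  have hgind : ∀ n, g n = Set.indicator (Set.Ici (lam n)) (fun u => b n * f' u) := by
    intro n
    funext u
    by_cases h : lam n ≤ u
    · simp [hg, h, Set.indicator_of_mem (Set.mem_Ici.2 h)]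
    · simp [hg, h, Set.indicator_of_notMem (fun hc => h (Set.mem_Ici.1 hc))]
  have hgint : ∀ n, IntervalIntegrable (g n) volume u₁ u₂ := by
    intro n
    have h1 : IntervalIntegrable (fun u => b n * f' u) volume u₁ u₂ :=
      (hf'.intervalIntegrable_of_Icc hle).const_mul _
    rw [hgind n, intervalIntegrable_iff] at *
    exact h1.indicator measurableSet_Ici
  have hInt : ∫ u in u₁..u₂, B u * f' u = ∑ n ∈ Finset.Ico 1 N, ∫ u in u₁..u₂, g n u := by
    rw [← intervalIntegral.integral_finset_sum (fun n _ => hgint n)]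
    apply intervalIntegral.integral_congr
    intro u hu
    rw [Set.uIcc_of_le hle] at hu
    show B u * f' u = ∑ i ∈ Finset.Ico 1 N, g i u
    rw [hBu u hu.2, Finset.sum_mul]
  have hval : ∀ n ∈ Finset.Ico 1 N, (∫ u in u₁..u₂, g n u) =
      if lam n ≤ u₁ then b n * (f u₂ - f u₁)
      else if lam n ≤ u₂ then b n * (f u₂ - f (lam n)) else 0 := by
    intro n _
    by_cases h1 : lam n ≤ u₁
    · rw [if_pos h1]
      have heq : ∫ u in u₁..u₂, g n u = ∫ u in u₁..u₂, b n * f' u := by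
        apply intervalIntegral.integral_congr
        intro u hu
        rw [Set.uIcc_of_le hle] at hu
        simp [hg, if_pos (h1.trans hu.1)]
      rw [heq, intervalIntegral.integral_const_mul, ftc u₁ ⟨le_rfl, hle⟩]
    · push_neg at h1
      rw [if_neg (not_le.2 h1)]
      by_cases h2 : lam n ≤ u₂
      · rw [if_pos h2]
        have hmem : Set.uIcc u₁ (lam n) ⊆ Set.uIcc u₁ u₂ :=
          Set.uIcc_subset_uIcc Set.left_mem_uIcc (by rw [Set.uIcc_of_le hle]; exact ⟨h1.le, h2⟩)
        have hmem2 : Set.uIcc (lam n) u₂ ⊆ Set.uIcc u₁ u₂ :=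
          Set.uIcc_subset_uIcc (by rw [Set.uIcc_of_le hle]; exact ⟨h1.le, h2⟩) Set.right_mem_uIcc
        have i1 : IntervalIntegrable (g n) volume u₁ (lam n) := (hgint n).mono_set hmem
        have i2 : IntervalIntegrable (g n) volume (lam n) u₂ := (hgint n).mono_set hmem2
        rw [← intervalIntegral.integral_add_adjacent_intervals i1 i2]
        have hz : ∫ u in u₁..lam n, g n u = 0 := by
          have hae : ∀ᵐ u ∂(volume : Measure ℝ), u ∈ Set.uIoc u₁ (lam n) → g n u = 0 := by
            have hne : ∀ᵐ u ∂(volume : Measure ℝ), u ≠ lam n :=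
              ae_iff.2 (by simp [Real.volume_singleton])
            filter_upwards [hne] with u hu hmem
            rw [Set.uIoc_of_le h1.le] at hmem
            have : u < lam n := lt_of_le_of_ne hmem.2 hu
            simp [hg, not_le.2 this]
          calc ∫ u in u₁..lam n, g n u = ∫ u in u₁..lam n, (0 : ℂ) :=
                intervalIntegral.integral_congr_ae hae
            _ = 0 := intervalIntegral.integral_zero
        have h2' : ∫ u in lam n..u₂, g n u = b n * (f u₂ - f (lam n)) := by
          have heq : ∫ u in lam n..u₂, g n u = ∫ u in lam n..u₂, b n * f' u := by
            apply intervalIntegral.integral_congr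
            intro u hu
            rw [Set.uIcc_of_le h2] at hu
            simp [hg, if_pos hu.1]
          rw [heq, intervalIntegral.integral_const_mul, ftc (lam n) ⟨h1.le, h2⟩]
        rw [hz, h2', zero_add]
      · rw [if_neg h2]
        push_neg at h2
        have : ∫ u in u₁..u₂, g n u = ∫ u in u₁..u₂, (0 : ℂ) := by
          apply intervalIntegral.integral_congr
          intro u hu
          rw [Set.uIcc_of_le hle] at hu
          simp [hg, not_le.2 (lt_of_le_of_lt hu.2 h2)]
        rw [this, intervalIntegral.integral_zero]
  rw [hLHS, hBu u₂ le_rfl, hBu u₁ hle, hInt, Finset.sum_congr rfl hval,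
    Finset.sum_mul, Finset.sum_mul, ← Finset.sum_sub_distrib, ← Finset.sum_sub_distrib]
  apply Finset.sum_congr rfl
  intro n _
  by_cases h1 : lam n ≤ u₁
  · rw [if_pos h1, if_pos (h1.trans hle), if_pos h1, if_neg (by push_neg; intro h; exact absurd h1 (not_le.2 h))]
    ring
  · push_neg at h1
    by_cases h2 : lam n ≤ u₂
    · rw [if_pos ⟨h1, h2⟩, if_pos h2, if_neg (not_le.2 h1), if_neg (not_le.2 h1), if_pos h2]
      ring
    · rw [if_neg (fun h => h2 h.2), if_neg h2, if_neg (not_le.2 h1), if_neg (not_le.2 h1), if_neg h2]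
      ring
end
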